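/- Let α be an ordinal with α > 1 that is not of the form ω^η for any ordinal η, and let X be a T1 topological space with more than one point. Then X does not satisfy CAP*_α. -/

import Mathlib

/-- `z` is an `E`-accumulation point of the `I`-indexed sequence `x`. -/
def IsAccPt {I X : Type*} [TopologicalSpace X] (E : Set (Set I)) (x : I → X) (z : X) : Prop :=
  ∀ U : Set X, IsOpen U → z ∈ U → {i | x i ∈ U} ∈ E

/-- `X` satisfies the `E`-accumulation property. -/
def AccProp {I : Type*} (X : Type*) [TopologicalSpace X] (E : Set (Set I)) : Prop :=
  ∀ x : I → X, ∃ z : X, IsAccPt E x z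

/-- A filter in the classical sense: a nonempty proper family closed under
finite intersections and supersets. -/
structure IsSetFilter {I : Type*} (F : Set (Set I)) : Prop where
  nonempty : F.Nonempty
  proper : (∅ : Set I) ∉ F
  inter : ∀ A ∈ F, ∀ B ∈ F, A ∩ B ∈ F
  mono : ∀ A ∈ F, ∀ B : Set I, A ⊆ B → B ∈ F

/-- A (set-)ultrafilter: a filter containing one of `J`, `Jᶜ` for every `J`. -/
def IsSetUltrafilter {I : Type*} (F : Set (Set I)) : Prop :=
  IsSetFilter F ∧ ∀ J : Set I, J ∈ F ∨ Jᶜ ∈ F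

/-- The order type of a subset of a well-ordered type, with the inherited order. -/
noncomputable def setOType {β : Type*} [LinearOrder β] [WellFoundedLT β] (S : Set β) : Ordinal :=
  Ordinal.type ((· < ·) : S → S → Prop)

/-- `X` satisfies the `α`-complete accumulation property `CAP*_α`: every `α`-indexed
sequence has a point all of whose open neighborhoods pick out a set of indices of
order type `α`. -/
def CAPstar (α : Ordinal) (X : Type*) [TopologicalSpace X] : Prop :=
  ∀ x : α.ToType → X, ∃ z : X, ∀ U : Set X, IsOpen U → z ∈ U →
    setOType {γ : α.ToType | x γ ∈ U} = α

theorem setOType_mono' {β : Type*} [LinearOrder β] [WellFoundedLT β] {S T : Set β}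
    (h : S ⊆ T) : setOType S ≤ setOType T := by
  unfold setOType
  refine Ordinal.type_le_iff'.2 ⟨(OrderEmbedding.ltEmbedding ?_)⟩
  exact OrderEmbedding.ofStrictMono (Set.inclusion h) (fun x y hxy => hxy)

universe u

theorem setOType_le_of_emb' {β : Type u} [LinearOrder β] [WellFoundedLT β] (S : Set β)
    (c : Ordinal.{u}) (f : S → c.ToType) (hf : StrictMono f) : setOType S ≤ c := by
  haveI : IsWellOrder c.ToType ((· < ·) : c.ToType → c.ToType → Prop) := isWellOrder_lt
  conv_rhs => rw [← Ordinal.type_toType c]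
  exact Ordinal.type_le_iff'.2 ⟨OrderEmbedding.ltEmbedding (OrderEmbedding.ofStrictMono f hf)⟩

theorem stmt18 (α : Ordinal) (hα1 : 1 < α)
    (hα : ¬ ∃ η : Ordinal, α = Ordinal.omega0 ^ η)
    (X : Type*) [TopologicalSpace X] [T1Space X] (hX : Nontrivial X) :
    ¬ CAPstar α X := by
  obtain ⟨u, v, huv⟩ := hX
  -- α is not additively principal
  have hnp : ¬ Ordinal.IsPrincipal (· + ·) α := by
    rw [Ordinal.principal_add_iff_zero_or_omega0_opow]
    rintro (rfl | ⟨η, rfl⟩)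
    · exact absurd hα1 (by simp)
    · exact hα ⟨η, rfl⟩
  rw [Ordinal.IsPrincipal] at hnp
  push_neg at hnp
  obtain ⟨a, b, ha, hb, hab⟩ := hnp
  set c : Ordinal := α - a with hc
  have hac : a + c = α := Ordinal.add_sub_cancel_of_le ha.le
  have hcb : c ≤ b := by
    rw [← add_le_add_iff_left a, hac]; exact hab
  have hcα : c < α := hcb.trans_lt hb
  haveI : IsWellOrder α.ToType ((· < ·) : α.ToType → α.ToType → Prop) := isWellOrder_lt
  set t : α.ToType → Ordinal := fun i => Ordinal.typein ((· < ·) : α.ToType → α.ToType → Prop) i with ht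
  have htlt : ∀ i, t i < α := fun i => by
    simpa [ht, Ordinal.type_toType] using
      Ordinal.typein_lt_type ((· < ·) : α.ToType → α.ToType → Prop) i
  have htmono : ∀ {i j : α.ToType}, i < j → t i < t j := fun {i j} h =>
    (Ordinal.typein_lt_typein _).2 h
  classical
  set x : α.ToType → X := fun i => if t i < a then u else v with hx
  intro hcap
  obtain ⟨z, hz⟩ := hcap x
  by_cases hzu : z = u
  · -- U = {v}ᶜ : indices land in the initial segment
    have hzv : z ≠ v := fun h => huv (hzu ▸ h.symm ▸ rfl)
    have key := hz {v}ᶜ isOpen_compl_singleton (by simpa using hzv)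
    have hsub : {γ : α.ToType | x γ ∈ ({v}ᶜ : Set X)} ⊆ {i : α.ToType | t i < a} := by
      intro i hi
      by_contra hia
      simp only [Set.mem_setOf_eq] at hia
      simp only [Set.mem_setOf_eq, hx, Set.mem_compl_iff, Set.mem_singleton_iff] at hi
      rw [if_neg hia] at hi
      exact hi rfl
    have hle : setOType {γ : α.ToType | x γ ∈ ({v}ᶜ : Set X)} ≤ a := by
      refine le_trans (setOType_mono' hsub) (setOType_le_of_emb' _ a
        (fun i => (Ordinal.ToType.mk (o := a)) ⟨t i.1, i.2⟩) ?_)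
      intro i j hij
      exact (Ordinal.ToType.mk (o := a)).strictMono (by exact htmono hij)
    exact absurd (key ▸ hle) (not_le.2 ha)
  · -- U = {u}ᶜ : indices land in the tail
    have key := hz {u}ᶜ isOpen_compl_singleton (by simpa using hzu)
    have hsub : {γ : α.ToType | x γ ∈ ({u}ᶜ : Set X)} ⊆ {i : α.ToType | ¬ t i < a} := by
      intro i hi
      by_contra hia
      simp only [Set.mem_setOf_eq, not_not] at hia
      simp only [Set.mem_setOf_eq, hx, Set.mem_compl_iff, Set.mem_singleton_iff] at hi
      rw [if_pos hia] at hi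
      exact hi rfl
    have hle : setOType {γ : α.ToType | x γ ∈ ({u}ᶜ : Set X)} ≤ c := by
      refine le_trans (setOType_mono' hsub) (setOType_le_of_emb' _ c
        (fun i => (Ordinal.ToType.mk (o := c)) ⟨t i.1 - a, ?_⟩) ?_)
      · simp only [Set.mem_Iio]
        rw [Ordinal.sub_lt_of_le (not_lt.1 i.2), hac]
        exact htlt i.1
      · intro i j hij
        refine (Ordinal.ToType.mk (o := c)).strictMono ?_
        have hi : a ≤ t i.1 := not_lt.1 i.2
        have hj : a ≤ t j.1 := not_lt.1 j.2
        show t i.1 - a < t j.1 - a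
        rw [← add_lt_add_iff_left a, Ordinal.add_sub_cancel_of_le hi,
          Ordinal.add_sub_cancel_of_le hj]
        exact htmono hij
    exact absurd (key ▸ hle) (not_le.2 hcα)
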